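/- Let c0 > 0, F ∈ ℝ, θ ∈ ℝ, and fix x' ∈ ℝ, z' > 0. Set k_θ = (sin θ, cos θ) and τ_y^θ(u) = c0^{-1}(y·k_θ + |y − (u,0)|) for y = (y1, y2) with y2 > 0. Define, on {(x,z) ∈ ℝ² : z > 0}, the functions w_±^θ(x,z) = τ_{(x,z)}^θ(x ± F z) − τ_{(x',z')}^θ(x ± F z). Then w_±^θ(x', z') = 0 and the gradient at (x', z') is ∇w_±^θ(x', z') = (c0^{-1}/√(1+F²)) · (√(1+F²) sin θ ∓ F , 1 + √(1+F²) cos θ). -/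

import Mathlib

/-- With `τ_{(y1,y2)}^θ(u) = c0⁻¹(y·k_θ + |y − (u,0)|)`, `k_θ = (sin θ, cos θ)`,
and the `±` sign encoded by `ε ∈ {1, −1}`, define on `ℝ²`
`w_±^θ(x,z) = τ_{(x,z)}^θ(x ± Fz) − τ_{(x',z')}^θ(x ± Fz)`.
Then `w_±^θ(x',z') = 0` and
`∇w_±^θ(x',z') = (c0⁻¹/√(1+F²)) (√(1+F²) sin θ ∓ F, 1 + √(1+F²) cos θ)`. -/
theorem travel_time_difference_gradient
    (c0 F θ x' z' : ℝ) (hc0 : 0 < c0) (hz' : 0 < z')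
    (ε : ℝ) (hε : ε = 1 ∨ ε = -1)
    (w : ℝ × ℝ → ℝ)
    (hw : ∀ p : ℝ × ℝ, w p =
      c0⁻¹ * ((p.1 * Real.sin θ + p.2 * Real.cos θ)
          + Real.sqrt ((p.1 - (p.1 + ε * F * p.2)) ^ 2 + p.2 ^ 2))
      - c0⁻¹ * ((x' * Real.sin θ + z' * Real.cos θ)
          + Real.sqrt ((x' - (p.1 + ε * F * p.2)) ^ 2 + z' ^ 2))) :
    w (x', z') = 0 ∧
    HasFDerivAt w
      ((c0⁻¹ / Real.sqrt (1 + F ^ 2)) •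
        ((Real.sqrt (1 + F ^ 2) * Real.sin θ - ε * F) • (ContinuousLinearMap.fst ℝ ℝ ℝ)
          + (1 + Real.sqrt (1 + F ^ 2) * Real.cos θ) • (ContinuousLinearMap.snd ℝ ℝ ℝ)))
      (x', z') := by
  have hε2 : ε ^ 2 = 1 := by rcases hε with rfl | rfl <;> norm_num
  have h1F : (0:ℝ) < 1 + F ^ 2 := by positivity
  set S := Real.sqrt (1 + F ^ 2) with hSdef
  have hS2 : S ^ 2 = 1 + F ^ 2 := Real.sq_sqrt h1F.le
  have hSpos : 0 < S := Real.sqrt_pos.2 h1F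
  have hq1 : (x' - (x' + ε * F * z')) ^ 2 + z' ^ 2 = z' ^ 2 * (1 + F ^ 2) := by
    rw [show (x' - (x' + ε * F * z')) ^ 2 = ε ^ 2 * (F ^ 2 * z' ^ 2) by ring, hε2]; ring
  have hs1 : Real.sqrt ((x' - (x' + ε * F * z')) ^ 2 + z' ^ 2) = z' * S := by
    rw [hq1, Real.sqrt_mul (sq_nonneg z'), Real.sqrt_sq hz'.le]
  have hne : (x' - (x' + ε * F * z')) ^ 2 + z' ^ 2 ≠ 0 := by rw [hq1]; positivity
  refine ⟨by rw [hw]; ring, ?_⟩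
  have ha : HasFDerivAt (fun p : ℝ × ℝ => p.1 - (p.1 + ε * F * p.2))
      (ContinuousLinearMap.fst ℝ ℝ ℝ -
        (ContinuousLinearMap.fst ℝ ℝ ℝ + (ε * F) • ContinuousLinearMap.snd ℝ ℝ ℝ)) (x', z') :=
    hasFDerivAt_fst.sub (hasFDerivAt_fst.add (hasFDerivAt_snd.const_mul (ε * F)))
  have hb : HasFDerivAt (fun p : ℝ × ℝ => x' - (p.1 + ε * F * p.2))
      (0 - (ContinuousLinearMap.fst ℝ ℝ ℝ + (ε * F) • ContinuousLinearMap.snd ℝ ℝ ℝ)) (x', z') :=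
    (hasFDerivAt_const x' _).sub (hasFDerivAt_fst.add (hasFDerivAt_snd.const_mul (ε * F)))
  have hq1d : HasFDerivAt
      (fun p : ℝ × ℝ => (p.1 - (p.1 + ε * F * p.2)) ^ 2 + p.2 ^ 2) _ (x', z') :=
    ((hasDerivAt_pow 2 _).comp_hasFDerivAt _ ha).add ((hasDerivAt_pow 2 _).comp_hasFDerivAt _ hasFDerivAt_snd)
  have hq2d : HasFDerivAt
      (fun p : ℝ × ℝ => (x' - (p.1 + ε * F * p.2)) ^ 2 + z' ^ 2) _ (x', z') :=
    ((hasDerivAt_pow 2 _).comp_hasFDerivAt _ hb).add_const (z' ^ 2)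
  have hs1d := (Real.hasDerivAt_sqrt hne).comp_hasFDerivAt (x', z') hq1d
  have hs2d := (Real.hasDerivAt_sqrt hne).comp_hasFDerivAt (x', z') hq2d
  have hlin : HasFDerivAt (fun p : ℝ × ℝ => p.1 * Real.sin θ + p.2 * Real.cos θ)
      (Real.sin θ • ContinuousLinearMap.fst ℝ ℝ ℝ + Real.cos θ • ContinuousLinearMap.snd ℝ ℝ ℝ)
      (x', z') := (hasFDerivAt_fst.mul_const _).add (hasFDerivAt_snd.mul_const _)
  have htot := ((hlin.add hs1d).const_mul c0⁻¹).sub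
    (((hasFDerivAt_const (x' * Real.sin θ + z' * Real.cos θ) _).add hs2d).const_mul c0⁻¹)
  have := htot.congr_of_eventuallyEq (Filter.Eventually.of_forall hw)
  refine this.congr_fderiv ?_
  refine ContinuousLinearMap.ext fun v => ?_
  simp only [ContinuousLinearMap.add_apply, ContinuousLinearMap.smul_apply,
    ContinuousLinearMap.sub_apply, ContinuousLinearMap.coe_fst', ContinuousLinearMap.coe_snd',
    ContinuousLinearMap.zero_apply, smul_eq_mul, hs1, pow_one]
  have hz0 : z' ≠ 0 := hz'.ne'
  field_simp
  ring_nf
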